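/- Let k be an algebraically closed complete non-Archimedean valued field and f = Σ_{n≥0} aₙ zⁿ a power series with a₀ ≠ 0 and |aₙ| rⁿ → 0. Then f has a zero z ∈ k with |z| ≤ r if and only if |a₀| ≤ sup_{n≥1} |aₙ| rⁿ. -/

import Mathlib

open Filter

section Aux


open Filter Polynomial IsUltrametricDist

variable {k : Type*} [NontriviallyNormedField k] [IsUltrametricDist k]

private lemma norm_sub_eq_right' {x y : k} (h : ‖x‖ < ‖y‖) : ‖x - y‖ = ‖y‖ := by
  rw [sub_eq_add_neg, norm_add_eq_max_of_norm_ne_norm (by rw [norm_neg]; exact h.ne),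
    norm_neg, max_eq_right h.le]

private lemma norm_sub_eq_left' {x y : k} (h : ‖y‖ < ‖x‖) : ‖x - y‖ = ‖x‖ := by
  rw [norm_sub_rev]; exact norm_sub_eq_right' h

private lemma norm_sub_le_max' (x y : k) : ‖x - y‖ ≤ max ‖x‖ ‖y‖ := by
  rw [sub_eq_add_neg]
  simpa using norm_add_le_max x (-y)

private lemma gauss {r : ℝ} (hr : 0 < r) (l : k) (hl : l ≠ 0) (s : Multiset k) :
    0 < ‖l‖ * (s.map fun w => max ‖w‖ r).prod ∧
    (∀ n, ‖(C l * (s.map fun w => X - C w).prod).coeff n‖ * r ^ n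
        ≤ ‖l‖ * (s.map fun w => max ‖w‖ r).prod) ∧
    ‖(C l * (s.map fun w => X - C w).prod).coeff
        (Multiset.card (s.filter fun w => ‖w‖ ≤ r))‖
        * r ^ Multiset.card (s.filter fun w => ‖w‖ ≤ r)
      = ‖l‖ * (s.map fun w => max ‖w‖ r).prod ∧
    ∀ n, Multiset.card (s.filter fun w => ‖w‖ ≤ r) < n →
      ‖(C l * (s.map fun w => X - C w).prod).coeff n‖ * r ^ n
        < ‖l‖ * (s.map fun w => max ‖w‖ r).prod := by
  classical
  induction s using Multiset.induction_on with
  | empty =>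
    have h0 : (0:ℝ) < ‖l‖ := norm_pos_iff.mpr hl
    refine ⟨by simpa using h0, fun n => ?_, by simp, fun n hn => ?_⟩
    · rcases n with _ | n
      · simp
      · simp only [Multiset.map_zero, Multiset.prod_zero, mul_one, coeff_C,
          Nat.succ_ne_zero, if_false, norm_zero, zero_mul]
        exact h0.le
    · rcases n with _ | n
      · simp at hn
      · simp only [Multiset.map_zero, Multiset.prod_zero, mul_one, coeff_C,
          Nat.succ_ne_zero, if_false, norm_zero, zero_mul]
        exact h0
  | cons w s ih =>
    obtain ⟨hBq, h1, h2, h3⟩ := ih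
    set q : Polynomial k := C l * (s.map fun w => X - C w).prod with hq
    set Bq : ℝ := ‖l‖ * (s.map fun w => max ‖w‖ r).prod with hBqdef
    set Nq : ℕ := Multiset.card (s.filter fun w => ‖w‖ ≤ r) with hNq
    have hp : C l * ((w ::ₘ s).map fun w => X - C w).prod = q * (X - C w) := by
      rw [Multiset.map_cons, Multiset.prod_cons, hq]; ring
    have hB : ‖l‖ * ((w ::ₘ s).map fun w => max ‖w‖ r).prod = max ‖w‖ r * Bq := by
      rw [Multiset.map_cons, Multiset.prod_cons, hBqdef]; ring
    have hc0 : (q * (X - C w)).coeff 0 = -(q.coeff 0 * w) := by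
      rw [mul_coeff_zero]
      simp [mul_comm]
    have hcS : ∀ n, (q * (X - C w)).coeff (n+1) = q.coeff n - q.coeff (n+1) * w :=
      fun n => coeff_mul_X_sub_C
    have hrn : ∀ n : ℕ, (0:ℝ) < r ^ n := fun n => pow_pos hr n
    by_cases hw : ‖w‖ ≤ r
    · have hfil : (w ::ₘ s).filter (fun w => ‖w‖ ≤ r) = w ::ₘ s.filter (fun w => ‖w‖ ≤ r) :=
        Multiset.filter_cons_of_pos _ hw
      have hmax : max ‖w‖ r = r := max_eq_right hw
      rw [hp, hB, hfil, hmax, Multiset.card_cons, ← hNq]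
      have key2 : ∀ n, ‖q.coeff (n+1) * w‖ * r ^ (n+1) ≤ Bq * r := by
        intro n
        rw [norm_mul]
        calc ‖q.coeff (n+1)‖ * ‖w‖ * r ^ (n+1)
            ≤ ‖q.coeff (n+1)‖ * r * r ^ (n+1) := by
              have := mul_le_mul_of_nonneg_left hw (norm_nonneg (q.coeff (n+1)))
              exact mul_le_mul_of_nonneg_right this (hrn _).le
          _ = (‖q.coeff (n+1)‖ * r ^ (n+1)) * r := by ring
          _ ≤ Bq * r := mul_le_mul_of_nonneg_right (h1 (n+1)) hr.le
      refine ⟨mul_pos hr hBq, fun n => ?_, ?_, fun n hn => ?_⟩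
      · rcases n with _ | n
        · rw [hc0, pow_zero, mul_one, norm_neg, norm_mul]
          have h10 := h1 0
          rw [pow_zero, mul_one] at h10
          calc ‖q.coeff 0‖ * ‖w‖ ≤ Bq * r :=
                mul_le_mul h10 hw (norm_nonneg _) hBq.le
            _ = r * Bq := mul_comm _ _
        · rw [hcS n]
          calc ‖q.coeff n - q.coeff (n+1) * w‖ * r ^ (n+1)
              ≤ max ‖q.coeff n‖ ‖q.coeff (n+1) * w‖ * r ^ (n+1) :=
                mul_le_mul_of_nonneg_right (norm_sub_le_max' _ _) (hrn _).le
            _ = max (‖q.coeff n‖ * r ^ (n+1)) (‖q.coeff (n+1) * w‖ * r ^ (n+1)) :=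
                max_mul_of_nonneg _ _ (hrn _).le
            _ ≤ r * Bq := by
                refine max_le ?_ ((key2 n).trans_eq (mul_comm _ _))
                calc ‖q.coeff n‖ * r ^ (n+1) = (‖q.coeff n‖ * r ^ n) * r := by ring
                  _ ≤ Bq * r := mul_le_mul_of_nonneg_right (h1 n) hr.le
                  _ = r * Bq := mul_comm _ _
      · rw [hcS Nq]
        have hlt : ‖q.coeff (Nq+1) * w‖ < ‖q.coeff Nq‖ := by
          have hstrict := h3 (Nq+1) (Nat.lt_succ_self _)
          rw [norm_mul]
          calc ‖q.coeff (Nq+1)‖ * ‖w‖ ≤ ‖q.coeff (Nq+1)‖ * r :=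
                mul_le_mul_of_nonneg_left hw (norm_nonneg _)
            _ < ‖q.coeff Nq‖ := by
                have h2' := h2
                -- (‖q.coeff (Nq+1)‖ * r) * r ^ Nq = ‖q.coeff (Nq+1)‖ * r ^ (Nq+1) < Bq
                --   = ‖q.coeff Nq‖ * r ^ Nq
                have hx : (‖q.coeff (Nq+1)‖ * r) * r ^ Nq < ‖q.coeff Nq‖ * r ^ Nq := by
                  calc (‖q.coeff (Nq+1)‖ * r) * r ^ Nq = ‖q.coeff (Nq+1)‖ * r ^ (Nq+1) := by ring
                    _ < Bq := hstrict
                    _ = ‖q.coeff Nq‖ * r ^ Nq := h2'.symm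
                exact lt_of_mul_lt_mul_right hx (hrn Nq).le
        rw [norm_sub_eq_left' hlt]
        calc ‖q.coeff Nq‖ * r ^ (Nq+1) = (‖q.coeff Nq‖ * r ^ Nq) * r := by ring
          _ = Bq * r := by rw [h2]
          _ = r * Bq := mul_comm _ _
      · rcases n with _ | n
        · omega
        · have hn' : Nq < n := by omega
          rw [hcS n]
          calc ‖q.coeff n - q.coeff (n+1) * w‖ * r ^ (n+1)
              ≤ max (‖q.coeff n‖ * r ^ (n+1)) (‖q.coeff (n+1) * w‖ * r ^ (n+1)) := by
                rw [← max_mul_of_nonneg _ _ (hrn (n+1)).le]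
                exact mul_le_mul_of_nonneg_right (norm_sub_le_max' _ _) (hrn _).le
            _ < r * Bq := by
                refine max_lt ?_ ?_
                · calc ‖q.coeff n‖ * r ^ (n+1) = (‖q.coeff n‖ * r ^ n) * r := by ring
                    _ < Bq * r := mul_lt_mul_of_pos_right (h3 n hn') hr
                    _ = r * Bq := mul_comm _ _
                · calc ‖q.coeff (n+1) * w‖ * r ^ (n+1)
                      ≤ (‖q.coeff (n+1)‖ * r ^ (n+1)) * r := by
                        rw [norm_mul]
                        calc ‖q.coeff (n+1)‖ * ‖w‖ * r ^ (n+1)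
                            = (‖q.coeff (n+1)‖ * r ^ (n+1)) * ‖w‖ := by ring
                          _ ≤ (‖q.coeff (n+1)‖ * r ^ (n+1)) * r := by
                              refine mul_le_mul_of_nonneg_left hw ?_
                              positivity
                    _ < Bq * r := mul_lt_mul_of_pos_right (h3 (n+1) (by omega)) hr
                    _ = r * Bq := mul_comm _ _
    · have hwr : r < ‖w‖ := not_le.mp hw
      have hfil : (w ::ₘ s).filter (fun w => ‖w‖ ≤ r) = s.filter (fun w => ‖w‖ ≤ r) :=
        Multiset.filter_cons_of_neg _ hw
      have hmax : max ‖w‖ r = ‖w‖ := max_eq_left hwr.le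
      rw [hp, hB, hfil, hmax, ← hNq]
      have hw0 : (0:ℝ) < ‖w‖ := hr.trans hwr
      refine ⟨mul_pos hw0 hBq, fun n => ?_, ?_, fun n hn => ?_⟩
      · rcases n with _ | n
        · rw [hc0, pow_zero, mul_one, norm_neg, norm_mul]
          have h10 := h1 0
          rw [pow_zero, mul_one] at h10
          calc ‖q.coeff 0‖ * ‖w‖ ≤ Bq * ‖w‖ :=
                mul_le_mul_of_nonneg_right h10 (norm_nonneg _)
            _ = ‖w‖ * Bq := mul_comm _ _
        · rw [hcS n]
          calc ‖q.coeff n - q.coeff (n+1) * w‖ * r ^ (n+1)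
              ≤ max (‖q.coeff n‖ * r ^ (n+1)) (‖q.coeff (n+1) * w‖ * r ^ (n+1)) := by
                rw [← max_mul_of_nonneg _ _ (hrn (n+1)).le]
                exact mul_le_mul_of_nonneg_right (norm_sub_le_max' _ _) (hrn _).le
            _ ≤ ‖w‖ * Bq := by
                refine max_le ?_ ?_
                · calc ‖q.coeff n‖ * r ^ (n+1) = (‖q.coeff n‖ * r ^ n) * r := by ring
                    _ ≤ Bq * r := mul_le_mul_of_nonneg_right (h1 n) hr.le
                    _ ≤ Bq * ‖w‖ := mul_le_mul_of_nonneg_left hwr.le hBq.le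
                    _ = ‖w‖ * Bq := mul_comm _ _
                · rw [norm_mul]
                  calc ‖q.coeff (n+1)‖ * ‖w‖ * r ^ (n+1)
                      = (‖q.coeff (n+1)‖ * r ^ (n+1)) * ‖w‖ := by ring
                    _ ≤ Bq * ‖w‖ := mul_le_mul_of_nonneg_right (h1 (n+1)) (norm_nonneg _)
                    _ = ‖w‖ * Bq := mul_comm _ _
      · rcases hNqcase : Nq with _ | m
        · rw [hNqcase] at h2 h3
          rw [hc0, pow_zero, mul_one, norm_neg, norm_mul]
          rw [pow_zero, mul_one] at h2
          rw [h2, mul_comm]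
        · rw [hNqcase] at h2 h3
          rw [hcS m]
          have hlt : ‖q.coeff m‖ < ‖q.coeff (m+1) * w‖ := by
            rw [norm_mul]
            have hx : ‖q.coeff m‖ * r ^ (m+1) < (‖q.coeff (m+1)‖ * ‖w‖) * r ^ (m+1) := by
              calc ‖q.coeff m‖ * r ^ (m+1) = (‖q.coeff m‖ * r ^ m) * r := by ring
                _ ≤ Bq * r := mul_le_mul_of_nonneg_right (h1 m) hr.le
                _ < Bq * ‖w‖ := mul_lt_mul_of_pos_left hwr hBq
                _ = (‖q.coeff (m+1)‖ * r ^ (m+1)) * ‖w‖ := by rw [h2]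
                _ = (‖q.coeff (m+1)‖ * ‖w‖) * r ^ (m+1) := by ring
            exact lt_of_mul_lt_mul_right hx (hrn (m+1)).le
          rw [norm_sub_eq_right' hlt, norm_mul]
          calc ‖q.coeff (m+1)‖ * ‖w‖ * r ^ (m+1)
              = (‖q.coeff (m+1)‖ * r ^ (m+1)) * ‖w‖ := by ring
            _ = Bq * ‖w‖ := by rw [h2]
            _ = ‖w‖ * Bq := mul_comm _ _
      · rcases n with _ | n
        · omega
        · rw [hcS n]
          calc ‖q.coeff n - q.coeff (n+1) * w‖ * r ^ (n+1)
              ≤ max (‖q.coeff n‖ * r ^ (n+1)) (‖q.coeff (n+1) * w‖ * r ^ (n+1)) := by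
                rw [← max_mul_of_nonneg _ _ (hrn (n+1)).le]
                exact mul_le_mul_of_nonneg_right (norm_sub_le_max' _ _) (hrn _).le
            _ < ‖w‖ * Bq := by
                refine max_lt ?_ ?_
                · calc ‖q.coeff n‖ * r ^ (n+1) = (‖q.coeff n‖ * r ^ n) * r := by ring
                    _ ≤ Bq * r := mul_le_mul_of_nonneg_right (h1 n) hr.le
                    _ < Bq * ‖w‖ := mul_lt_mul_of_pos_left hwr hBq
                    _ = ‖w‖ * Bq := mul_comm _ _
                · rw [norm_mul]
                  calc ‖q.coeff (n+1)‖ * ‖w‖ * r ^ (n+1)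
                      = (‖q.coeff (n+1)‖ * r ^ (n+1)) * ‖w‖ := by ring
                    _ < Bq * ‖w‖ :=
                        mul_lt_mul_of_pos_right (h3 (n+1) (by omega)) hw0
                    _ = ‖w‖ * Bq := mul_comm _ _

private lemma pow_card_le_prod_map (g : k → ℝ) (hg : ∀ x, 0 ≤ g x) (t : Multiset k)
    (ht : t ≠ 0) : ∃ w ∈ t, g w ^ Multiset.card t ≤ (t.map g).prod := by
  induction t using Multiset.induction_on with
  | empty => exact absurd rfl ht
  | cons a t ih =>
    rcases eq_or_ne t 0 with rfl | ht'
    · exact ⟨a, Multiset.mem_cons_self a 0, by simp⟩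
    · obtain ⟨w, hw, hwle⟩ := ih ht'
      have hprodnn : (0:ℝ) ≤ (t.map g).prod := by
        refine Multiset.prod_nonneg ?_
        intro x hx
        obtain ⟨y, _, rfl⟩ := Multiset.mem_map.mp hx
        exact hg y
      rcases le_total (g a) (g w) with h | h
      · refine ⟨a, Multiset.mem_cons_self a t, ?_⟩
        rw [Multiset.map_cons, Multiset.prod_cons, Multiset.card_cons, pow_succ']
        refine mul_le_mul_of_nonneg_left ?_ (hg a)
        exact le_trans (pow_le_pow_left₀ (hg a) h _) hwle
      · refine ⟨w, Multiset.mem_cons_of_mem hw, ?_⟩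
        rw [Multiset.map_cons, Multiset.prod_cons, Multiset.card_cons, pow_succ']
        exact mul_le_mul h hwle (pow_nonneg (hg w) _) (hg a)

private lemma norm_multiset_prod' (m : Multiset k) : ‖m.prod‖ = (m.map fun x => ‖x‖).prod := by
  induction m using Multiset.induction_on with
  | empty => simp
  | cons a t ih => simp [norm_mul, ih]

private lemma step {r : ℝ} (hr : 0 < r) (l : k) (s : Multiset k) (z : k) (hz : ‖z‖ ≤ r)
    (hN : Multiset.card (s.filter fun w => ‖w‖ ≤ r) ≠ 0) :
    ∃ w ∈ s, ‖w‖ ≤ r ∧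
      ‖z - w‖ ^ Multiset.card (s.filter fun w => ‖w‖ ≤ r)
          * (‖l‖ * (s.map fun w => max ‖w‖ r).prod)
        ≤ ‖(C l * (s.map fun w => X - C w).prod).eval z‖
          * r ^ Multiset.card (s.filter fun w => ‖w‖ ≤ r) := by
  classical
  set sin := s.filter (fun w => ‖w‖ ≤ r) with hsin
  set sout := s.filter (fun w => ¬ ‖w‖ ≤ r) with hsout
  have hsplit : sin + sout = s := Multiset.filter_add_not _ s
  set N := Multiset.card sin with hNdef
  set Pout : ℝ := (sout.map fun w => ‖w‖).prod with hPout
  set Pin : ℝ := (sin.map fun w => ‖z - w‖).prod with hPin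
  have houtmem : ∀ w ∈ sout, r < ‖w‖ := by
    intro w hw
    exact not_le.mp (Multiset.mem_filter.mp hw).2
  -- the max-product
  have hmaxprod : (s.map fun w => max ‖w‖ r).prod = r ^ N * Pout := by
    rw [← hsplit, Multiset.map_add, Multiset.prod_add]
    congr 1
    · have hconst : Multiset.map (fun w => max ‖w‖ r) sin = Multiset.map (fun _ => r) sin :=
        Multiset.map_congr rfl fun w hw => max_eq_right (Multiset.mem_filter.mp hw).2
      rw [hconst, Multiset.map_const', Multiset.prod_replicate]
    · rw [hPout]
      exact congrArg Multiset.prod (Multiset.map_congr rfl fun w hw => max_eq_left (houtmem w hw).le)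
  -- the eval norm
  have hevalnorm : ‖(C l * (s.map fun w => X - C w).prod).eval z‖ = ‖l‖ * (Pin * Pout) := by
    rw [eval_mul, eval_C, eval_multiset_prod, Multiset.map_map, norm_mul]
    congr 1
    have hcomp : Multiset.map (eval z ∘ fun w => X - C w) s = Multiset.map (fun w => z - w) s :=
      Multiset.map_congr rfl fun w _ => by simp
    rw [hcomp, norm_multiset_prod', Multiset.map_map, ← hsplit, Multiset.map_add,
      Multiset.prod_add, hPin, hPout]
    congr 1
    exact congrArg Multiset.prod (Multiset.map_congr rfl fun w hw =>
      norm_sub_eq_right' (lt_of_le_of_lt hz (houtmem w hw)))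
  have hsinne : sin ≠ 0 := by
    intro h
    exact hN (by rw [hNdef, h, Multiset.card_zero])
  obtain ⟨w, hwmem, hwpow⟩ := pow_card_le_prod_map (fun w => ‖z - w‖)
    (fun x => norm_nonneg _) sin hsinne
  have hPoutnn : (0:ℝ) ≤ Pout := by
    refine Multiset.prod_nonneg ?_
    intro x hx
    obtain ⟨y, _, rfl⟩ := Multiset.mem_map.mp hx
    exact norm_nonneg _
  refine ⟨w, (Multiset.mem_filter.mp hwmem).1, (Multiset.mem_filter.mp hwmem).2, ?_⟩
  rw [hmaxprod, hevalnorm]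
  calc ‖z - w‖ ^ N * (‖l‖ * (r ^ N * Pout))
      = (‖z - w‖ ^ N * Pout * ‖l‖) * r ^ N := by ring
    _ ≤ (Pin * Pout * ‖l‖) * r ^ N := by
        refine mul_le_mul_of_nonneg_right ?_ (pow_nonneg hr.le _)
        refine mul_le_mul_of_nonneg_right ?_ (norm_nonneg _)
        exact mul_le_mul_of_nonneg_right hwpow hPoutnn
    _ = ‖l‖ * (Pin * Pout) * r ^ N := by ring

private lemma exists_eq_ciSup' {g : ℕ → ℝ} (hg : Filter.Tendsto g Filter.atTop (nhds 0))
    (hpos : 0 < ⨆ n, g n) : ∃ n, g n = ⨆ n, g n := by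
  have hbdd : BddAbove (Set.range g) := hg.bddAbove_range
  obtain ⟨n₂, hn₂⟩ := exists_lt_of_lt_ciSup (half_lt_self hpos)
  obtain ⟨M, hM⟩ := Filter.eventually_atTop.mp (hg.eventually_lt_const (half_pos hpos))
  set T := max M (n₂ + 1) with hT
  have hne : (Finset.range T).Nonempty := ⟨n₂, Finset.mem_range.mpr (by omega)⟩
  obtain ⟨n₀, _, hn₀⟩ := Finset.exists_mem_eq_sup' hne g
  have hK : ∀ n, g n ≤ (Finset.range T).sup' hne g := by
    intro n
    by_cases hn : n < T
    · exact Finset.le_sup' g (Finset.mem_range.mpr hn)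
    · have h1 : g n < (⨆ n, g n) / 2 := hM n (by omega)
      have h2 : g n₂ ≤ (Finset.range T).sup' hne g :=
        Finset.le_sup' g (Finset.mem_range.mpr (by omega))
      linarith
  refine ⟨n₀, le_antisymm (le_ciSup hbdd n₀) ?_⟩
  exact le_trans (ciSup_le hK) (le_of_eq hn₀)

private lemma pow_sub_pow_norm_le {r : ℝ} (hr : 0 < r) {x y : k} (hx : ‖x‖ ≤ r)
    (hy : ‖y‖ ≤ r) : ∀ n : ℕ, ‖x ^ (n+1) - y ^ (n+1)‖ ≤ ‖x - y‖ * r ^ n := by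
  intro n
  induction n with
  | zero => simp
  | succ n ih =>
    have hid : x ^ (n+2) - y ^ (n+2) = x * (x ^ (n+1) - y ^ (n+1)) + (x - y) * y ^ (n+1) := by
      ring
    rw [hid]
    refine le_trans (norm_add_le_max _ _) (max_le ?_ ?_)
    · rw [norm_mul]
      calc ‖x‖ * ‖x ^ (n+1) - y ^ (n+1)‖ ≤ r * (‖x - y‖ * r ^ n) :=
            mul_le_mul hx ih (norm_nonneg _) hr.le
        _ = ‖x - y‖ * r ^ (n+1) := by ring
    · rw [norm_mul, norm_pow]
      calc ‖x - y‖ * ‖y‖ ^ (n+1) ≤ ‖x - y‖ * r ^ (n+1) :=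
            mul_le_mul_of_nonneg_left (pow_le_pow_left₀ (norm_nonneg _) hy _) (norm_nonneg _)
        _ = _ := rfl

end Aux

open Polynomial IsUltrametricDist

/-- A power series with `a₀ ≠ 0` and `‖aₙ‖ rⁿ → 0` has a zero in the closed disc of
radius `r` iff `‖a₀‖ ≤ sup_{n ≥ 1} ‖aₙ‖ rⁿ`. -/
theorem zero_in_disc_iff
    (k : Type*) [NontriviallyNormedField k] [IsAlgClosed k] [CompleteSpace k]
    [IsUltrametricDist k]
    (a : ℕ → k) (c : k) (hc : c ≠ 0) (r : ℝ) (hr : r = ‖c‖)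
    (ha0 : a 0 ≠ 0)
    (hdecay : Tendsto (fun n => ‖a n‖ * r ^ n) atTop (nhds 0)) :
    (∃ z : k, ‖z‖ ≤ r ∧ ∑' n : ℕ, a n * z ^ n = 0)
      ↔ ‖a 0‖ ≤ ⨆ n : ℕ, ‖a (n + 1)‖ * r ^ (n + 1) := by
  classical
  have hr0 : 0 < r := by rw [hr]; exact norm_pos_iff.mpr hc
  have hrn : ∀ n : ℕ, (0:ℝ) < r ^ n := fun n => pow_pos hr0 n
  set u : ℕ → ℝ := fun n => ‖a n‖ * r ^ n with hu
  have hu0 : ∀ n, 0 ≤ u n := fun n => mul_nonneg (norm_nonneg _) (hrn n).le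
  have hbdd : BddAbove (Set.range u) := hdecay.bddAbove_range
  have hbddS : BddAbove (Set.range fun n => u (n+1)) := by
    obtain ⟨C, hC⟩ := hbdd
    exact ⟨C, by rintro x ⟨n, rfl⟩; exact hC ⟨n+1, rfl⟩⟩
  have htermle : ∀ z : k, ‖z‖ ≤ r → ∀ n, ‖a n * z ^ n‖ ≤ u n := by
    intro z hz n
    rw [norm_mul, norm_pow]
    exact mul_le_mul_of_nonneg_left (pow_le_pow_left₀ (norm_nonneg z) hz n) (norm_nonneg _)
  have hsum : ∀ z : k, ‖z‖ ≤ r → Summable (fun n => a n * z ^ n) := by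
    intro z hz
    refine NonarchimedeanAddGroup.summable_of_tendsto_cofinite_zero ?_
    rw [Nat.cofinite_eq_atTop]
    exact squeeze_zero_norm (htermle z hz) hdecay
  constructor
  · rintro ⟨z, hz, hf⟩
    have hs := hsum z hz
    have h0 : a 0 * z ^ 0 + ∑' n, a (n+1) * z ^ (n+1) = 0 := by
      rw [← hs.tsum_eq_zero_add, hf]
    rw [pow_zero, mul_one] at h0
    have ha0eq : ‖a 0‖ = ‖∑' n, a (n+1) * z ^ (n+1)‖ := by
      rw [eq_neg_of_add_eq_zero_left h0, norm_neg]
    rw [ha0eq]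
    refine norm_tsum_le_of_forall_le_of_nonneg ?_ ?_
    · exact Real.iSup_nonneg fun n => mul_nonneg (norm_nonneg _) (hrn _).le
    · intro n
      exact (htermle z hz (n+1)).trans (le_ciSup hbddS n)
  · intro hS
    have hSu : (⨆ n : ℕ, ‖a (n + 1)‖ * r ^ (n + 1)) = ⨆ n, u (n + 1) := rfl
    have hu00 : 0 < u 0 := by
      have h : u 0 = ‖a 0‖ := by simp [hu]
      rw [h]; exact norm_pos_iff.mpr ha0
    set B : ℝ := ⨆ n, u n with hB
    have hle_B : ∀ n, u n ≤ B := fun n => le_ciSup hbdd n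
    have hu0S : u 0 ≤ ⨆ n, u (n + 1) := by
      rw [← hSu]
      simpa [hu] using hS
    have hBS : B ≤ ⨆ n, u (n + 1) := by
      refine ciSup_le fun n => ?_
      cases n with
      | zero => exact hu0S
      | succ m => exact le_ciSup hbddS m
    have hSB : (⨆ n, u (n + 1)) ≤ B := ciSup_le fun n => hle_B (n+1)
    have hBSeq : B = ⨆ n, u (n + 1) := le_antisymm hBS hSB
    have hBpos : 0 < B := lt_of_lt_of_le hu00 (hle_B 0)
    have hshift : Tendsto (fun n => u (n+1)) atTop (nhds 0) :=
      hdecay.comp (tendsto_add_atTop_nat 1)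
    obtain ⟨n₁, hn₁⟩ := exists_eq_ciSup' hshift (hBSeq ▸ hBpos)
    obtain ⟨M₀, hM₀⟩ := eventually_atTop.mp (hdecay.eventually_lt_const hu00)
    set Nx : ℕ := Nat.findGreatest (fun n => B ≤ u n) (max M₀ (n₁+1)) with hNx
    have hach : B ≤ u (n₁ + 1) := le_of_eq (hBSeq.trans hn₁.symm)
    have hNxspec : B ≤ u Nx :=
      Nat.findGreatest_spec (P := fun n => B ≤ u n) (le_max_right M₀ (n₁+1)) hach
    have hNxgreatest : ∀ n, B ≤ u n → n ≤ Nx := by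
      intro n hn
      by_cases hnM : n ≤ max M₀ (n₁+1)
      · exact Nat.le_findGreatest hnM hn
      · exfalso
        have h1 : M₀ ≤ n := by omega
        have := hM₀ n h1
        have := hle_B 0
        linarith
    have hNx1 : 1 ≤ Nx := le_trans (by omega) (hNxgreatest (n₁+1) hach)
    have hNxB : u Nx = B := le_antisymm (hle_B Nx) hNxspec
    -- truncations
    set p : ℕ → Polynomial k := fun m => ∑ n ∈ Finset.range (m+1), C (a n) * X ^ n with hp
    have hcoeff : ∀ m n, (p m).coeff n = if n ≤ m then a n else 0 := by
      intro m n
      rw [hp]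
      simp only [finset_sum_coeff, coeff_C_mul, coeff_X_pow, mul_ite, mul_one, mul_zero]
      rw [Finset.sum_ite_eq (Finset.range (m+1)) n (fun i => a i)]
      simp [Nat.lt_succ_iff]
    have hpne : ∀ m, p m ≠ 0 := by
      intro m h
      have h2 := hcoeff m 0
      rw [h] at h2
      simp only [coeff_zero, Nat.zero_le, if_true] at h2
      exact ha0 h2.symm
    have hevalp : ∀ m (z : k), (p m).eval z = ∑ n ∈ Finset.range (m+1), a n * z ^ n := by
      intro m z
      rw [hp, eval_finset_sum]
      simp
    have hdeg : ∀ m, (p m).natDegree ≤ m := by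
      intro m
      refine natDegree_le_iff_coeff_eq_zero.mpr fun N hN => ?_
      rw [hcoeff, if_neg (by omega)]
    have hfact : ∀ m, p m = C (p m).leadingCoeff *
        (((p m).roots).map fun w => X - C w).prod :=
      fun m => (IsAlgClosed.splits _).eq_prod_roots
    have hlx : ∀ m, (p m).leadingCoeff ≠ 0 := fun m => leadingCoeff_ne_zero.mpr (hpne m)
    have hgauss : ∀ m,
        0 < ‖(p m).leadingCoeff‖ * (((p m).roots).map fun w => max ‖w‖ r).prod ∧
        (∀ n, ‖(p m).coeff n‖ * r ^ n
          ≤ ‖(p m).leadingCoeff‖ * (((p m).roots).map fun w => max ‖w‖ r).prod) ∧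
        ‖(p m).coeff (Multiset.card (((p m).roots).filter fun w => ‖w‖ ≤ r))‖
            * r ^ Multiset.card (((p m).roots).filter fun w => ‖w‖ ≤ r)
          = ‖(p m).leadingCoeff‖ * (((p m).roots).map fun w => max ‖w‖ r).prod ∧
        ∀ n, Multiset.card (((p m).roots).filter fun w => ‖w‖ ≤ r) < n →
          ‖(p m).coeff n‖ * r ^ n
            < ‖(p m).leadingCoeff‖ * (((p m).roots).map fun w => max ‖w‖ r).prod := by
      intro m
      have h := gauss hr0 ((p m).leadingCoeff) (hlx m) ((p m).roots)
      rwa [← hfact m] at h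
    have hcu : ∀ m n, n ≤ m → ‖(p m).coeff n‖ * r ^ n = u n := by
      intro m n h
      rw [hcoeff, if_pos h]
    have hstab : ∀ m, Nx ≤ m →
        Multiset.card (((p m).roots).filter fun w => ‖w‖ ≤ r) = Nx ∧
        ‖(p m).leadingCoeff‖ * (((p m).roots).map fun w => max ‖w‖ r).prod = B := by
      intro m hm
      obtain ⟨hBmpos, hle, heq, hlt⟩ := hgauss m
      have hNmm : Multiset.card (((p m).roots).filter fun w => ‖w‖ ≤ r) ≤ m := by
        calc Multiset.card (((p m).roots).filter fun w => ‖w‖ ≤ r)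
            ≤ Multiset.card ((p m).roots) := Multiset.card_le_card (Multiset.filter_le _ _)
          _ ≤ (p m).natDegree := (p m).card_roots'
          _ ≤ m := hdeg m
      have hBmB : ‖(p m).leadingCoeff‖ * (((p m).roots).map fun w => max ‖w‖ r).prod = B := by
        apply le_antisymm
        · rw [← heq, hcu m _ hNmm]; exact hle_B _
        · calc B = u Nx := hNxB.symm
            _ = ‖(p m).coeff Nx‖ * r ^ Nx := (hcu m Nx hm).symm
            _ ≤ _ := hle Nx
      refine ⟨?_, hBmB⟩
      have h1 : Multiset.card (((p m).roots).filter fun w => ‖w‖ ≤ r) ≤ Nx := by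
        apply hNxgreatest
        rw [← hcu m _ hNmm, heq, hBmB]
      have h2 : ¬ (Multiset.card (((p m).roots).filter fun w => ‖w‖ ≤ r) < Nx) := by
        intro hlt2
        have h3 := hlt Nx hlt2
        rw [hcu m Nx hm, hNxB, hBmB] at h3
        exact lt_irrefl B h3
      omega
    have hkey : ∀ m, Nx ≤ m → ∀ z : k, ‖z‖ ≤ r →
        ∃ w : k, ‖w‖ ≤ r ∧ (p m).eval w = 0 ∧
          ‖z - w‖ ^ Nx * B ≤ ‖(p m).eval z‖ * r ^ Nx := by
      intro m hm z hz
      obtain ⟨hNmeq, hBmeq⟩ := hstab m hm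
      have hNne : Multiset.card (((p m).roots).filter fun w => ‖w‖ ≤ r) ≠ 0 := by
        rw [hNmeq]; omega
      obtain ⟨w, hwmem, hwr, hineq⟩ := step hr0 ((p m).leadingCoeff) ((p m).roots) z hz hNne
      refine ⟨w, hwr, ?_, ?_⟩
      · exact isRoot_of_mem_roots hwmem
      · rw [← hfact m, hNmeq, hBmeq] at hineq
        exact hineq
    have hroot0 : ∃ z : k, ‖z‖ ≤ r ∧ (p Nx).eval z = 0 := by
      have h1 := (hstab Nx le_rfl).1
      have hpos : 0 < Multiset.card (((p Nx).roots).filter fun w => ‖w‖ ≤ r) := by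
        rw [h1]; omega
      obtain ⟨w, hw⟩ := Multiset.card_pos_iff_exists_mem.mp hpos
      obtain ⟨hwmem, hwr⟩ := Multiset.mem_filter.mp hw
      exact ⟨w, hwr, isRoot_of_mem_roots hwmem⟩
    choose! W hW1 hW2 hW3 using hkey
    obtain ⟨z₀, hz₀r, hz₀root⟩ := hroot0
    set Z : ℕ → k := fun j =>
      Nat.rec (motive := fun _ => k) z₀ (fun j zj => W (Nx + j + 1) zj) j with hZ
    have hZsucc : ∀ j, Z (j+1) = W (Nx + j + 1) (Z j) := fun j => rfl
    have hinv : ∀ j, ‖Z j‖ ≤ r ∧ (p (Nx + j)).eval (Z j) = 0 := by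
      intro j
      induction j with
      | zero => exact ⟨hz₀r, hz₀root⟩
      | succ j ih =>
        have hm : Nx ≤ Nx + j + 1 := by omega
        rw [hZsucc j]
        refine ⟨hW1 (Nx + j + 1) hm (Z j) ih.1, ?_⟩
        have h2 := (hW2 (Nx + j + 1) hm (Z j) ih.1)
        rw [show Nx + (j+1) = Nx + j + 1 from rfl]
        exact h2
    have hstepb : ∀ j, ‖Z j - Z (j+1)‖ ^ Nx * B ≤ u (Nx + j + 1) * r ^ Nx := by
      intro j
      have hm : Nx ≤ Nx + j + 1 := by omega
      have h3 := hW3 (Nx + j + 1) hm (Z j) (hinv j).1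
      rw [← hZsucc j] at h3
      refine h3.trans ?_
      refine mul_le_mul_of_nonneg_right ?_ (pow_nonneg hr0.le _)
      have hev : (p (Nx + j + 1)).eval (Z j)
          = (p (Nx + j)).eval (Z j) + a (Nx + j + 1) * (Z j) ^ (Nx + j + 1) := by
        rw [hevalp, hevalp, Finset.sum_range_succ]
      rw [hev, (hinv j).2, zero_add]
      exact htermle (Z j) (hinv j).1 (Nx + j + 1)
    have hd0 : Tendsto (fun j => ‖Z j - Z (j+1)‖) atTop (nhds 0) := by
      rw [Metric.tendsto_atTop]
      intro ε hε
      have hεN : 0 < ε ^ Nx * B / r ^ Nx := by positivity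
      obtain ⟨I, hI⟩ := eventually_atTop.mp (hdecay.eventually_lt_const hεN)
      refine ⟨I, fun j hj => ?_⟩
      have hIu : u (Nx + j + 1) < ε ^ Nx * B / r ^ Nx := hI _ (by omega)
      have h1 : ‖Z j - Z (j+1)‖ ^ Nx * B < ε ^ Nx * B := by
        refine lt_of_le_of_lt (hstepb j) ?_
        calc u (Nx + j + 1) * r ^ Nx < (ε ^ Nx * B / r ^ Nx) * r ^ Nx :=
              mul_lt_mul_of_pos_right hIu (hrn Nx)
          _ = ε ^ Nx * B := by field_simp
      have h2 : ‖Z j - Z (j+1)‖ ^ Nx < ε ^ Nx := lt_of_mul_lt_mul_right h1 hBpos.le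
      have h3 : ‖Z j - Z (j+1)‖ < ε := lt_of_pow_lt_pow_left₀ Nx hε.le h2
      rw [Real.dist_eq, sub_zero, abs_of_nonneg (norm_nonneg _)]
      exact h3
    have hcauchy : CauchySeq Z := by
      rw [Metric.cauchySeq_iff']
      intro ε hε
      obtain ⟨I, hI⟩ := (Metric.tendsto_atTop.mp hd0) ε hε
      have hI' : ∀ j, I ≤ j → ‖Z j - Z (j+1)‖ < ε := by
        intro j hj
        have h := hI j hj
        rwa [Real.dist_eq, sub_zero, abs_of_nonneg (norm_nonneg _)] at h
      refine ⟨I, fun j hj => ?_⟩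
      induction j, hj using Nat.le_induction with
      | base => simpa [dist_self] using hε
      | succ j hj ih =>
        refine lt_of_le_of_lt (IsUltrametricDist.dist_triangle_max (Z (j+1)) (Z j) (Z I)) ?_
        refine max_lt ?_ ih
        rw [dist_eq_norm, norm_sub_rev]
        exact hI' j hj
    obtain ⟨zlim, hzlim⟩ := cauchySeq_tendsto_of_complete hcauchy
    have hzlimr : ‖zlim‖ ≤ r :=
      le_of_tendsto hzlim.norm (Filter.Eventually.of_forall fun j => (hinv j).1)
    have hdiff : ∀ x y : k, ‖x‖ ≤ r → ‖y‖ ≤ r →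
        ‖(∑' n, a n * x ^ n) - (∑' n, a n * y ^ n)‖ ≤ B / r * ‖x - y‖ := by
      intro x y hx hy
      rw [← (hsum x hx).tsum_sub (hsum y hy)]
      refine norm_tsum_le_of_forall_le_of_nonneg (by positivity) ?_
      intro n
      cases n with
      | zero => simpa using (by positivity : (0:ℝ) ≤ B / r * ‖x - y‖)
      | succ n =>
        rw [← mul_sub, norm_mul]
        calc ‖a (n+1)‖ * ‖x ^ (n+1) - y ^ (n+1)‖ ≤ ‖a (n+1)‖ * (‖x - y‖ * r ^ n) :=
              mul_le_mul_of_nonneg_left (pow_sub_pow_norm_le hr0 hx hy n) (norm_nonneg _)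
          _ = (‖a (n+1)‖ * r ^ n) * ‖x - y‖ := by ring
          _ ≤ B / r * ‖x - y‖ := by
              refine mul_le_mul_of_nonneg_right ?_ (norm_nonneg _)
              rw [le_div_iff₀ hr0]
              calc ‖a (n+1)‖ * r ^ n * r = ‖a (n+1)‖ * r ^ (n+1) := by ring
                _ ≤ B := hle_B (n+1)
    have hFz : ∀ η : ℝ, 0 < η → ‖∑' n, a n * zlim ^ n‖ ≤ η := by
      intro η hη
      obtain ⟨M₂, hM₂⟩ := eventually_atTop.mp (hdecay.eventually_lt_const hη)
      have hZdist : Tendsto (fun j => ‖zlim - Z j‖) atTop (nhds 0) := by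
        have h := (tendsto_const_nhds (x := zlim) (f := atTop)).sub hzlim
        rw [sub_self] at h
        simpa using h.norm
      obtain ⟨J, hJ⟩ :=
        eventually_atTop.mp (hZdist.eventually_lt_const (by positivity : (0:ℝ) < η * r / B))
      set j := max J M₂ with hj
      have hjM₂ : M₂ ≤ j := le_max_right _ _
      have hsummZ := hsum (Z j) (hinv j).1
      have htail : (∑' n, a n * (Z j) ^ n)
          = ∑' n, a (n + (Nx + j + 1)) * (Z j) ^ (n + (Nx + j + 1)) := by
        have h := Summable.sum_add_tsum_nat_add (f := fun n => a n * (Z j) ^ n) (Nx + j + 1) hsummZ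
        rw [← h, ← hevalp (Nx + j) (Z j), (hinv j).2, zero_add]
      have hFzj : ‖∑' n, a n * (Z j) ^ n‖ ≤ η := by
        rw [htail]
        refine norm_tsum_le_of_forall_le_of_nonneg hη.le ?_
        intro n
        refine (htermle (Z j) (hinv j).1 _).trans ?_
        exact (hM₂ _ (by omega)).le
      have hdist : ‖(∑' n, a n * zlim ^ n) - (∑' n, a n * (Z j) ^ n)‖ ≤ η := by
        refine (hdiff zlim (Z j) hzlimr (hinv j).1).trans ?_
        have hZj := (hJ j (le_max_left _ _)).le
        calc B / r * ‖zlim - Z j‖ ≤ B / r * (η * r / B) :=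
              mul_le_mul_of_nonneg_left hZj (by positivity)
          _ = η := by field_simp
      calc ‖∑' n, a n * zlim ^ n‖
          = ‖((∑' n, a n * zlim ^ n) - (∑' n, a n * (Z j) ^ n)) + (∑' n, a n * (Z j) ^ n)‖ := by
            rw [sub_add_cancel]
        _ ≤ max ‖(∑' n, a n * zlim ^ n) - (∑' n, a n * (Z j) ^ n)‖ ‖∑' n, a n * (Z j) ^ n‖ :=
            norm_add_le_max _ _
        _ ≤ η := max_le hdist hFzj
    have h0 : ‖∑' n, a n * zlim ^ n‖ = 0 := by
      by_contra h
      have hpos' : 0 < ‖∑' n, a n * zlim ^ n‖ := lt_of_le_of_ne (norm_nonneg _) (Ne.symm h)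
      have h2 := hFz (‖∑' n, a n * zlim ^ n‖ / 2) (by positivity)
      linarith
    exact ⟨zlim, hzlimr, norm_eq_zero.mp h0⟩
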